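/- Let f ∈ ℂ[z] be monic of degree n ≥ 2 with root-vector ξ ∈ ℂⁿ (f(z) = ∏ᵢ (z - ξᵢ)), let x ∈ ℂⁿ and y ∈ ℂⁿ, and fix i with f(xᵢ) ≠ 0 and xᵢ ≠ yⱼ for all j ≠ i. Then f'(xᵢ)/f(xᵢ) - ∑_{j ≠ i} 1/(xᵢ - yⱼ) = (1 - σᵢ)/(xᵢ - ξᵢ), where σᵢ = (xᵢ - ξᵢ) ∑_{j ≠ i} (yⱼ - ξⱼ)/((xᵢ - ξⱼ)(xᵢ - yⱼ)). -/

import Mathlib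

open Polynomial Finset

theorem aux_derivative_prod {ι : Type*} [DecidableEq ι] (s : Finset ι) (g : ι → Polynomial ℂ) :
    derivative (∏ i ∈ s, g i) = ∑ i ∈ s, (∏ j ∈ s.erase i, g j) * derivative (g i) := by
  induction s using Finset.induction_on with
  | empty => simp
  | insert _ _ ha ih =>
    rename_i a s
    rw [Finset.prod_insert ha, derivative_mul, ih, Finset.sum_insert ha, Finset.erase_insert ha,
      Finset.mul_sum]
    congr 1
    · exact mul_comm _ _
    refine Finset.sum_congr rfl fun i hi => ?_
    have hia : a ≠ i := fun h => ha (h ▸ hi)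
    have hane : a ∉ s.erase i := fun h => ha (Finset.mem_of_mem_erase h)
    rw [Finset.erase_insert_of_ne hia, Finset.prod_insert hane, mul_assoc]

theorem ehrlich_identity (n : ℕ) (hn : 2 ≤ n) (ξ x y : Fin n → ℂ)
    (f : Polynomial ℂ) (hf : f = ∏ j : Fin n, (X - C (ξ j)))
    (i : Fin n) (hfx : f.eval (x i) ≠ 0)
    (hxy : ∀ j : Fin n, j ≠ i → x i ≠ y j) :
    f.derivative.eval (x i) / f.eval (x i) - ∑ j ∈ univ.erase i, 1 / (x i - y j)
      = (1 - (x i - ξ i) * ∑ j ∈ univ.erase i,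
            (y j - ξ j) / ((x i - ξ j) * (x i - y j))) / (x i - ξ i) := by
  have hev : f.eval (x i) = ∏ j : Fin n, (x i - ξ j) := by
    simp [hf, eval_prod]
  have hne : ∀ j : Fin n, x i - ξ j ≠ 0 := by
    intro j hj
    apply hfx
    rw [hev]
    exact Finset.prod_eq_zero (mem_univ j) hj
  have hys : ∀ j ∈ univ.erase i, x i - y j ≠ 0 := by
    intro j hj
    have := hxy j (Finset.mem_erase.mp hj).1
    exact sub_ne_zero_of_ne this
  have hd : f.derivative.eval (x i)
      = ∑ j : Fin n, ∏ k ∈ univ.erase j, (x i - ξ k) := by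
    rw [hf, aux_derivative_prod]
    simp [eval_finset_sum, eval_prod]
  have h1 : f.derivative.eval (x i) / f.eval (x i)
      = ∑ j : Fin n, 1 / (x i - ξ j) := by
    rw [hd, hev, Finset.sum_div]
    refine Finset.sum_congr rfl fun j _ => ?_
    rw [← Finset.mul_prod_erase univ _ (mem_univ j), mul_comm, div_mul_eq_div_div,
      div_self (Finset.prod_ne_zero_iff.mpr fun k _ => hne k)]
  have key : ∑ j ∈ univ.erase i, 1 / (x i - ξ j) - ∑ j ∈ univ.erase i, 1 / (x i - y j)
      = -∑ j ∈ univ.erase i, (y j - ξ j) / ((x i - ξ j) * (x i - y j)) := by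
    rw [← Finset.sum_sub_distrib, ← Finset.sum_neg_distrib]
    refine Finset.sum_congr rfl fun j hj => ?_
    have h2 := hne j
    have h3 := hys j hj
    field_simp
    ring
  rw [h1, ← Finset.sum_erase_add _ _ (mem_univ i), sub_div,
    mul_comm, mul_div_assoc, div_self (hne i), mul_one]
  linear_combination key
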